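/- For every integer n ≥ 1, the subgroup Γ₁(tⁿ) has index q^{2(n−1)} in Γ₁(t). -/

import Mathlib

open Polynomial Matrix

/-- `Γ₁(𝔫)` as a subgroup of `SL₂(A)`, `A = F[t]`:
matrices congruent to `[[1,*],[0,1]]` mod `𝔫`. -/
def Gamma1SL (F : Type*) [Field F] (𝔫 : Polynomial F) :
    Subgroup (Matrix.SpecialLinearGroup (Fin 2) (Polynomial F)) where
  carrier := {γ | 𝔫 ∣ (γ : Matrix (Fin 2) (Fin 2) (Polynomial F)) 1 0 ∧
    𝔫 ∣ ((γ : Matrix (Fin 2) (Fin 2) (Polynomial F)) 0 0 - 1) ∧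
    𝔫 ∣ ((γ : Matrix (Fin 2) (Fin 2) (Polynomial F)) 1 1 - 1)}
  one_mem' := by simp
  mul_mem' := by
    rintro a b ⟨ha1, ha2, ha3⟩ ⟨hb1, hb2, hb3⟩
    refine ⟨?_, ?_, ?_⟩ <;>
      simp only [Matrix.SpecialLinearGroup.coe_mul, Matrix.mul_apply, Fin.sum_univ_two]
    · exact dvd_add (ha1.mul_right _) (hb1.mul_left _)
    · have heq : (a : Matrix (Fin 2) (Fin 2) (Polynomial F)) 0 0 * b 0 0 +
          a 0 1 * b 1 0 - 1 =
          ((a : Matrix (Fin 2) (Fin 2) (Polynomial F)) 0 0 - 1) * b 0 0 +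
            (b 0 0 - 1) + a 0 1 * b 1 0 := by ring
      rw [heq]
      exact dvd_add (dvd_add (ha2.mul_right _) hb2) (hb1.mul_left _)
    · have heq : (a : Matrix (Fin 2) (Fin 2) (Polynomial F)) 1 0 * b 0 1 +
          a 1 1 * b 1 1 - 1 =
          a 1 0 * b 0 1 + ((a : Matrix (Fin 2) (Fin 2) (Polynomial F)) 1 1 - 1) * b 1 1 +
            (b 1 1 - 1) := by ring
      rw [heq]
      exact dvd_add (dvd_add (ha1.mul_right _) (ha3.mul_right _)) hb3
  inv_mem' := by
    rintro a ⟨ha1, ha2, ha3⟩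
    refine ⟨?_, ?_, ?_⟩ <;>
      simp only [Matrix.SpecialLinearGroup.coe_inv, Matrix.adjugate_fin_two,
        Matrix.cons_val', Matrix.cons_val_zero, Matrix.cons_val_one, Matrix.head_cons,
        Matrix.empty_val', Matrix.cons_val_fin_one, Matrix.head_fin_const, Matrix.of_apply]
    · exact ha1.neg_right
    · exact ha3
    · exact ha2

namespace Stmt5Aux

variable {F : Type*} [Field F]

lemma coeff_mul_zero_of_dvd {m : ℕ} {a b : Polynomial F}
    (ha : (X : Polynomial F) ^ (m + 1) ∣ a) (hb : (X : Polynomial F) ^ (m + 1) ∣ b) :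
    (a * b).coeff (m + 1) = 0 := by
  have h2 : (X : Polynomial F) ^ (m + 1) * X ^ (m + 1) ∣ a * b := mul_dvd_mul ha hb
  rw [← pow_add] at h2
  exact X_pow_dvd_iff.mp ((pow_dvd_pow X (show m + 2 ≤ m + 1 + (m + 1) by omega)).trans h2)
    (m + 1) (by omega)

lemma coeff_mul_right_zero {m : ℕ} (a : Polynomial F) {b : Polynomial F}
    (hb : (X : Polynomial F) ^ (m + 2) ∣ b) : (a * b).coeff (m + 1) = 0 :=
  X_pow_dvd_iff.mp (hb.mul_left a) (m + 1) (by omega)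

lemma dvd_succ {k : ℕ} {a : Polynomial F} (h : (X : Polynomial F) ^ k ∣ a)
    (h0 : a.coeff k = 0) : (X : Polynomial F) ^ (k + 1) ∣ a := by
  rw [X_pow_dvd_iff] at h ⊢
  intro d hd
  rcases Nat.lt_succ_iff_lt_or_eq.mp hd with h' | rfl
  · exact h d h'
  · exact h0

lemma coeff_of_dvd_succ {k : ℕ} {a : Polynomial F} (h : (X : Polynomial F) ^ (k + 1) ∣ a) :
    a.coeff k = 0 := X_pow_dvd_iff.mp h k (by omega)

/-- Intermediate subgroup between `Γ₁(t^{m+2})` and `Γ₁(t^{m+1})`: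
the `(1,0)` entry is divisible by `t^{m+2}` already. -/
def GammaH (F : Type*) [Field F] (m : ℕ) :
    Subgroup (Matrix.SpecialLinearGroup (Fin 2) (Polynomial F)) where
  carrier := {γ | (X : Polynomial F) ^ (m + 2) ∣ (γ : Matrix (Fin 2) (Fin 2) (Polynomial F)) 1 0 ∧
    (X : Polynomial F) ^ (m + 1) ∣ ((γ : Matrix (Fin 2) (Fin 2) (Polynomial F)) 0 0 - 1) ∧
    (X : Polynomial F) ^ (m + 1) ∣ ((γ : Matrix (Fin 2) (Fin 2) (Polynomial F)) 1 1 - 1)}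
  one_mem' := by simp
  mul_mem' := by
    rintro a b ⟨ha1, ha2, ha3⟩ ⟨hb1, hb2, hb3⟩
    refine ⟨?_, ?_, ?_⟩ <;>
      simp only [Matrix.SpecialLinearGroup.coe_mul, Matrix.mul_apply, Fin.sum_univ_two]
    · exact dvd_add (ha1.mul_right _) (hb1.mul_left _)
    · have heq : (a : Matrix (Fin 2) (Fin 2) (Polynomial F)) 0 0 * b 0 0 +
          a 0 1 * b 1 0 - 1 =
          ((a : Matrix (Fin 2) (Fin 2) (Polynomial F)) 0 0 - 1) * b 0 0 +
            (b 0 0 - 1) + a 0 1 * b 1 0 := by ring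
      rw [heq]
      exact dvd_add (dvd_add (ha2.mul_right _) hb2)
        (((pow_dvd_pow X (by omega)).trans hb1).mul_left _)
    · have heq : (a : Matrix (Fin 2) (Fin 2) (Polynomial F)) 1 0 * b 0 1 +
          a 1 1 * b 1 1 - 1 =
          a 1 0 * b 0 1 + ((a : Matrix (Fin 2) (Fin 2) (Polynomial F)) 1 1 - 1) * b 1 1 +
            (b 1 1 - 1) := by ring
      rw [heq]
      exact dvd_add (dvd_add (((pow_dvd_pow X (by omega)).trans ha1).mul_right _)
        (ha3.mul_right _)) hb3
  inv_mem' := by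
    rintro a ⟨ha1, ha2, ha3⟩
    refine ⟨?_, ?_, ?_⟩ <;>
      simp only [Matrix.SpecialLinearGroup.coe_inv, Matrix.adjugate_fin_two,
        Matrix.cons_val', Matrix.cons_val_zero, Matrix.cons_val_one, Matrix.head_cons,
        Matrix.empty_val', Matrix.cons_val_fin_one, Matrix.head_fin_const, Matrix.of_apply]
    · exact ha1.neg_right
    · exact ha3
    · exact ha2

lemma Gamma1SL_mono {𝔪 𝔫 : Polynomial F} (h : 𝔪 ∣ 𝔫) : Gamma1SL F 𝔫 ≤ Gamma1SL F 𝔪 := by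
  rintro γ ⟨h1, h2, h3⟩
  exact ⟨h.trans h1, h.trans h2, h.trans h3⟩

lemma Gamma1_succ_le_H (m : ℕ) : Gamma1SL F ((X : Polynomial F) ^ (m + 2)) ≤ GammaH F m := by
  rintro γ ⟨h1, h2, h3⟩
  exact ⟨h1, (pow_dvd_pow X (by omega)).trans h2, (pow_dvd_pow X (by omega)).trans h3⟩

lemma H_le_Gamma1 (m : ℕ) : GammaH F m ≤ Gamma1SL F ((X : Polynomial F) ^ (m + 1)) := by
  rintro γ ⟨h1, h2, h3⟩
  exact ⟨(pow_dvd_pow X (by omega)).trans h1, h2, h3⟩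

/-- The first homomorphism: coefficient of `t^{m+1}` of the `(1,0)` entry. -/
noncomputable def phi (F : Type*) [Field F] (m : ℕ) :
    ↥(Gamma1SL F ((X : Polynomial F) ^ (m + 1))) →* Multiplicative F where
  toFun γ := Multiplicative.ofAdd
    ((((γ : Matrix.SpecialLinearGroup (Fin 2) (Polynomial F)) :
      Matrix (Fin 2) (Fin 2) (Polynomial F)) 1 0).coeff (m + 1))
  map_one' := by simp
  map_mul' := by
    intro a b
    obtain ⟨ha1, ha2, ha3⟩ := a.2
    obtain ⟨hb1, hb2, hb3⟩ := b.2
    have key : (((a * b : ↥(Gamma1SL F ((X : Polynomial F) ^ (m + 1)))) :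
        Matrix.SpecialLinearGroup (Fin 2) (Polynomial F)) :
        Matrix (Fin 2) (Fin 2) (Polynomial F)) 1 0 =
        ((a : Matrix.SpecialLinearGroup (Fin 2) (Polynomial F)) :
          Matrix (Fin 2) (Fin 2) (Polynomial F)) 1 0 *
          (((b : Matrix.SpecialLinearGroup (Fin 2) (Polynomial F)) :
            Matrix (Fin 2) (Fin 2) (Polynomial F)) 0 0 - 1) +
        (((a : Matrix.SpecialLinearGroup (Fin 2) (Polynomial F)) :
          Matrix (Fin 2) (Fin 2) (Polynomial F)) 1 1 - 1) *
          ((b : Matrix.SpecialLinearGroup (Fin 2) (Polynomial F)) :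
            Matrix (Fin 2) (Fin 2) (Polynomial F)) 1 0 +
        ((a : Matrix.SpecialLinearGroup (Fin 2) (Polynomial F)) :
          Matrix (Fin 2) (Fin 2) (Polynomial F)) 1 0 +
        ((b : Matrix.SpecialLinearGroup (Fin 2) (Polynomial F)) :
          Matrix (Fin 2) (Fin 2) (Polynomial F)) 1 0 := by
      simp only [Subgroup.coe_mul, Matrix.SpecialLinearGroup.coe_mul, Matrix.mul_apply,
        Fin.sum_univ_two]
      ring
    rw [key, ← ofAdd_add]
    congr 1
    rw [coeff_add, coeff_add, coeff_add, coeff_mul_zero_of_dvd ha1 hb2,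
      coeff_mul_zero_of_dvd ha3 hb1, zero_add, zero_add]

lemma ker_phi (m : ℕ) :
    (phi F m).ker = (GammaH F m).subgroupOf (Gamma1SL F ((X : Polynomial F) ^ (m + 1))) := by
  ext γ
  obtain ⟨h1, h2, h3⟩ := γ.2
  rw [MonoidHom.mem_ker, Subgroup.mem_subgroupOf]
  have hφ : phi F m γ = Multiplicative.ofAdd
      ((((γ : Matrix.SpecialLinearGroup (Fin 2) (Polynomial F)) :
        Matrix (Fin 2) (Fin 2) (Polynomial F)) 1 0).coeff (m + 1)) := rfl
  rw [hφ, ofAdd_eq_one]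
  constructor
  · intro h0
    exact ⟨dvd_succ h1 h0, h2, h3⟩
  · rintro ⟨g1, g2, g3⟩
    exact coeff_of_dvd_succ g1

lemma range_phi (m : ℕ) : (phi F m).range = ⊤ := by
  rw [MonoidHom.range_eq_top]
  intro α
  refine ⟨⟨⟨!![1, 0; C (Multiplicative.toAdd α) * X ^ (m + 1), 1], by
    simp [Matrix.det_fin_two_of]⟩, ?_, ?_, ?_⟩, ?_⟩
  · simp [dvd_mul_left]
  · simp
  · simp
  · have hφ : phi F m ⟨⟨!![1, 0; C (Multiplicative.toAdd α) * X ^ (m + 1), 1], by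
        simp [Matrix.det_fin_two_of]⟩, by simp [dvd_mul_left], by simp, by simp⟩ =
        Multiplicative.ofAdd (((!![1, 0; C (Multiplicative.toAdd α) * X ^ (m + 1), 1] :
          Matrix (Fin 2) (Fin 2) (Polynomial F)) 1 0).coeff (m + 1)) := rfl
    rw [hφ]
    simp [coeff_C_mul, coeff_X_pow]

/-- The second homomorphism: coefficient of `t^{m+1}` of the `(0,0)` entry minus 1. -/
noncomputable def psi (F : Type*) [Field F] (m : ℕ) : ↥(GammaH F m) →* Multiplicative F where
  toFun γ := Multiplicative.ofAdd
    (((((γ : Matrix.SpecialLinearGroup (Fin 2) (Polynomial F)) :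
      Matrix (Fin 2) (Fin 2) (Polynomial F)) 0 0) - 1).coeff (m + 1))
  map_one' := by simp
  map_mul' := by
    intro a b
    obtain ⟨ha1, ha2, ha3⟩ := a.2
    obtain ⟨hb1, hb2, hb3⟩ := b.2
    have key : (((a * b : ↥(GammaH F m)) :
        Matrix.SpecialLinearGroup (Fin 2) (Polynomial F)) :
        Matrix (Fin 2) (Fin 2) (Polynomial F)) 0 0 - 1 =
        (((a : Matrix.SpecialLinearGroup (Fin 2) (Polynomial F)) :
          Matrix (Fin 2) (Fin 2) (Polynomial F)) 0 0 - 1) *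
          (((b : Matrix.SpecialLinearGroup (Fin 2) (Polynomial F)) :
            Matrix (Fin 2) (Fin 2) (Polynomial F)) 0 0 - 1) +
        ((a : Matrix.SpecialLinearGroup (Fin 2) (Polynomial F)) :
          Matrix (Fin 2) (Fin 2) (Polynomial F)) 0 1 *
          ((b : Matrix.SpecialLinearGroup (Fin 2) (Polynomial F)) :
            Matrix (Fin 2) (Fin 2) (Polynomial F)) 1 0 +
        (((a : Matrix.SpecialLinearGroup (Fin 2) (Polynomial F)) :
          Matrix (Fin 2) (Fin 2) (Polynomial F)) 0 0 - 1) +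
        (((b : Matrix.SpecialLinearGroup (Fin 2) (Polynomial F)) :
          Matrix (Fin 2) (Fin 2) (Polynomial F)) 0 0 - 1) := by
      simp only [Subgroup.coe_mul, Matrix.SpecialLinearGroup.coe_mul, Matrix.mul_apply,
        Fin.sum_univ_two]
      ring
    rw [key, ← ofAdd_add]
    congr 1
    rw [coeff_add, coeff_add, coeff_add, coeff_mul_zero_of_dvd ha2 hb2,
      coeff_mul_right_zero _ hb1, zero_add, zero_add]

lemma ker_psi (m : ℕ) :
    (psi F m).ker = (Gamma1SL F ((X : Polynomial F) ^ (m + 2))).subgroupOf (GammaH F m) := by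
  ext γ
  obtain ⟨h1, h2, h3⟩ := γ.2
  have hdet := ((γ : Matrix.SpecialLinearGroup (Fin 2) (Polynomial F))).2
  rw [Matrix.det_fin_two] at hdet
  rw [MonoidHom.mem_ker, Subgroup.mem_subgroupOf]
  have hψ : psi F m γ = Multiplicative.ofAdd
      (((((γ : Matrix.SpecialLinearGroup (Fin 2) (Polynomial F)) :
        Matrix (Fin 2) (Fin 2) (Polynomial F)) 0 0) - 1).coeff (m + 1)) := rfl
  rw [hψ, ofAdd_eq_one]
  constructor
  · intro h0
    have ha : (X : Polynomial F) ^ (m + 2) ∣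
        (((γ : Matrix.SpecialLinearGroup (Fin 2) (Polynomial F)) :
          Matrix (Fin 2) (Fin 2) (Polynomial F)) 0 0 - 1) := dvd_succ h2 h0
    refine ⟨h1, ha, ?_⟩
    have heq : ((γ : Matrix.SpecialLinearGroup (Fin 2) (Polynomial F)) :
        Matrix (Fin 2) (Fin 2) (Polynomial F)) 1 1 - 1 =
        ((γ : Matrix.SpecialLinearGroup (Fin 2) (Polynomial F)) :
          Matrix (Fin 2) (Fin 2) (Polynomial F)) 0 1 *
        ((γ : Matrix.SpecialLinearGroup (Fin 2) (Polynomial F)) :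
          Matrix (Fin 2) (Fin 2) (Polynomial F)) 1 0 -
        (((γ : Matrix.SpecialLinearGroup (Fin 2) (Polynomial F)) :
          Matrix (Fin 2) (Fin 2) (Polynomial F)) 0 0 - 1) *
        ((γ : Matrix.SpecialLinearGroup (Fin 2) (Polynomial F)) :
          Matrix (Fin 2) (Fin 2) (Polynomial F)) 1 1 := by
      linear_combination hdet
    rw [heq]
    exact dvd_sub (h1.mul_left _) (ha.mul_right _)
  · rintro ⟨g1, g2, g3⟩
    exact coeff_of_dvd_succ g2

lemma range_psi (m : ℕ) : (psi F m).range = ⊤ := by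
  rw [MonoidHom.range_eq_top]
  intro α
  have hdet : (!![1 + C (Multiplicative.toAdd α) * X ^ (m + 1), X ^ m;
      -(C (Multiplicative.toAdd α) ^ 2 * X ^ (m + 2)),
      1 - C (Multiplicative.toAdd α) * X ^ (m + 1)] :
      Matrix (Fin 2) (Fin 2) (Polynomial F)).det = 1 := by
    rw [Matrix.det_fin_two_of]
    ring
  have hm1 : (X : Polynomial F) ^ (m + 2) ∣
      (!![1 + C (Multiplicative.toAdd α) * X ^ (m + 1), X ^ m;
      -(C (Multiplicative.toAdd α) ^ 2 * X ^ (m + 2)),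
      1 - C (Multiplicative.toAdd α) * X ^ (m + 1)] :
      Matrix (Fin 2) (Fin 2) (Polynomial F)) 1 0 := by
    simp only [Matrix.cons_val', Matrix.cons_val_zero, Matrix.cons_val_one, Matrix.head_cons,
      Matrix.empty_val', Matrix.cons_val_fin_one, Matrix.head_fin_const, Matrix.of_apply]
    exact (dvd_mul_left _ _).neg_right
  have hm2 : (X : Polynomial F) ^ (m + 1) ∣
      ((!![1 + C (Multiplicative.toAdd α) * X ^ (m + 1), X ^ m;
      -(C (Multiplicative.toAdd α) ^ 2 * X ^ (m + 2)),
      1 - C (Multiplicative.toAdd α) * X ^ (m + 1)] :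
      Matrix (Fin 2) (Fin 2) (Polynomial F)) 0 0 - 1) := by
    simp only [Matrix.cons_val', Matrix.cons_val_zero, Matrix.cons_val_one, Matrix.head_cons,
      Matrix.empty_val', Matrix.cons_val_fin_one, Matrix.head_fin_const, Matrix.of_apply,
      add_sub_cancel_left]
    exact dvd_mul_left _ _
  have hm3 : (X : Polynomial F) ^ (m + 1) ∣
      ((!![1 + C (Multiplicative.toAdd α) * X ^ (m + 1), X ^ m;
      -(C (Multiplicative.toAdd α) ^ 2 * X ^ (m + 2)),
      1 - C (Multiplicative.toAdd α) * X ^ (m + 1)] :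
      Matrix (Fin 2) (Fin 2) (Polynomial F)) 1 1 - 1) := by
    simp only [Matrix.cons_val', Matrix.cons_val_zero, Matrix.cons_val_one, Matrix.head_cons,
      Matrix.empty_val', Matrix.cons_val_fin_one, Matrix.head_fin_const, Matrix.of_apply,
      sub_sub_cancel_left]
    exact (dvd_mul_left _ _).neg_right
  refine ⟨⟨⟨_, hdet⟩, hm1, hm2, hm3⟩, ?_⟩
  have hψ : psi F m ⟨⟨_, hdet⟩, hm1, hm2, hm3⟩ = Multiplicative.ofAdd
      (((!![1 + C (Multiplicative.toAdd α) * X ^ (m + 1), X ^ m;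
      -(C (Multiplicative.toAdd α) ^ 2 * X ^ (m + 2)),
      1 - C (Multiplicative.toAdd α) * X ^ (m + 1)] :
      Matrix (Fin 2) (Fin 2) (Polynomial F)) 0 0 - 1).coeff (m + 1)) := rfl
  rw [hψ]
  simp [coeff_C_mul, coeff_X_pow]

lemma card_of_range_top {G : Type*} [Group G] [Fintype F] (f : G →* Multiplicative F)
    (h : f.range = ⊤) : f.ker.index = Fintype.card F := by
  rw [Subgroup.index_ker, h, Nat.card_congr Subgroup.topEquiv.toEquiv,
    Nat.card_eq_fintype_card, Fintype.card_multiplicative]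

lemma relindex_H (m : ℕ) [Fintype F] :
    (GammaH F m).relIndex (Gamma1SL F ((X : Polynomial F) ^ (m + 1))) = Fintype.card F := by
  rw [Subgroup.relIndex, ← ker_phi, card_of_range_top _ (range_phi m)]

lemma relindex_psi (m : ℕ) [Fintype F] :
    (Gamma1SL F ((X : Polynomial F) ^ (m + 2))).relIndex (GammaH F m) = Fintype.card F := by
  rw [Subgroup.relIndex, ← ker_psi, card_of_range_top _ (range_psi m)]

lemma relindex_step (m : ℕ) [Fintype F] :
    (Gamma1SL F ((X : Polynomial F) ^ (m + 2))).relIndex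
      (Gamma1SL F ((X : Polynomial F) ^ (m + 1))) = Fintype.card F ^ 2 := by
  rw [← Subgroup.relIndex_mul_relIndex (Gamma1SL F ((X : Polynomial F) ^ (m + 2)))
    (GammaH F m) (Gamma1SL F ((X : Polynomial F) ^ (m + 1)))
    (Gamma1_succ_le_H m) (H_le_Gamma1 m), relindex_psi, relindex_H, sq]

lemma main_aux (F : Type*) [Field F] [Fintype F] (m : ℕ) :
    (Gamma1SL F ((X : Polynomial F) ^ (m + 1))).relIndex (Gamma1SL F (X : Polynomial F)) =
      (Fintype.card F) ^ (2 * m) := by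
  induction m with
  | zero => simp [pow_one, Subgroup.relIndex_self]
  | succ m ih =>
    rw [← Subgroup.relIndex_mul_relIndex (Gamma1SL F ((X : Polynomial F) ^ (m + 2)))
      (Gamma1SL F ((X : Polynomial F) ^ (m + 1))) (Gamma1SL F (X : Polynomial F))
      (Gamma1SL_mono (pow_dvd_pow X (by omega)))
      (Gamma1SL_mono (by simpa using dvd_pow_self (X : Polynomial F) (Nat.succ_ne_zero m))),
      relindex_step, ih, ← pow_add]
    congr 1
    omega

end Stmt5Aux

theorem stmt5 (p : ℕ) (hp : p.Prime) (F : Type*) [Field F] [Fintype F] [CharP F p]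
    (n : ℕ) (hn : 1 ≤ n) :
    (Gamma1SL F ((X : Polynomial F) ^ n)).relIndex (Gamma1SL F (X : Polynomial F)) =
      (Fintype.card F) ^ (2 * (n - 1)) := by
  obtain ⟨m, rfl⟩ : ∃ m, n = m + 1 := ⟨n - 1, by omega⟩
  simpa using Stmt5Aux.main_aux F m
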